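/- (Jacobi triple product) For complex p, z with |p| < 1 and z ≠ 0, one has (p;p)_∞ (z;p)_∞ (p z^{-1};p)_∞ = ∑_{n∈ℤ} (-1)^n p^{n(n-1)/2} z^n, where the series converges absolutely. -/

import Mathlib

/-- The infinite q-Pochhammer symbol `(x;p)_∞ = ∏_{n≥0} (1 - x pⁿ)`. -/
noncomputable def qPoch (x p : ℂ) : ℂ := ∏' n : ℕ, (1 - x * p ^ n)

open Filter Finset



noncomputable def jtpE (n : ℤ) : ℤ := n * (n - 1) / 2

lemma jtpE_two_mul (n : ℤ) : 2 * jtpE n = n * (n - 1) := by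
  obtain ⟨m, hm⟩ := Int.even_mul_succ_self (n - 1)
  have : n * (n - 1) = 2 * m := by linarith [hm]
  rw [jtpE, this]
  rw [Int.mul_ediv_cancel_left _ (by norm_num)]

lemma jtpE_add (a b : ℤ) : jtpE (a + b) = jtpE a + jtpE b + a * b := by
  have h2 : (2:ℤ) ≠ 0 := by norm_num
  apply mul_left_cancel₀ h2
  rw [jtpE_two_mul]
  have ha := jtpE_two_mul a
  have hb := jtpE_two_mul b
  ring_nf
  nlinarith [ha, hb]

lemma jtpE_nonneg (n : ℤ) : 0 ≤ jtpE n := by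
  apply Int.ediv_nonneg _ (by norm_num)
  rcases le_or_gt 1 n with h | h
  · nlinarith
  · nlinarith

lemma jtpE_zero : jtpE 0 = 0 := by decide
lemma jtpE_one : jtpE 1 = 0 := by decide

lemma jtpE_succ (n : ℤ) : jtpE (n + 1) = jtpE n + n := by
  rw [jtpE_add]; simp [jtpE_one]

lemma jtpE_neg (n : ℤ) : jtpE (-n) = jtpE (n + 1) := by
  have h2 : (2:ℤ) ≠ 0 := by norm_num
  apply mul_left_cancel₀ h2
  rw [jtpE_two_mul, jtpE_two_mul]; ring

lemma jtpE_pos {n : ℤ} (h : n ≠ 0) (h1 : n ≠ 1) : 0 < jtpE n := by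
  have := jtpE_two_mul n
  have : 2 ≤ n * (n - 1) := by
    rcases lt_or_gt_of_ne h with hn | hn
    · nlinarith
    · have : 2 ≤ n := by omega
      nlinarith
  omega

section summability

variable (p z : ℂ)

noncomputable def jtpF : ℤ → ℂ := fun n => (-1 : ℂ) ^ n * p ^ (jtpE n) * z ^ n

lemma jtpF_succ (hp : p ≠ 0) (hz : z ≠ 0) (n : ℤ) :
    jtpF p z (n + 1) = jtpF p z n * (-(p ^ n * z)) := by
  have h1 : (-1 : ℂ) ≠ 0 := by norm_num
  rw [jtpF, jtpE_succ, zpow_add₀ h1, zpow_add₀ hp, zpow_add₀ hz, jtpF, zpow_one, zpow_one]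
  ring

lemma jtpF_pred (hp : p ≠ 0) (hz : z ≠ 0) (n : ℤ) :
    jtpF p z (-(n + 1)) = jtpF p z (-n) * (-(p ^ (n + 1) * z⁻¹)) := by
  have h1 : (-1 : ℂ) ≠ 0 := by norm_num
  have e1 : jtpE (-(n + 1)) = jtpE (-n) + (n + 1) := by
    rw [jtpE_neg, jtpE_neg, show n + 1 + 1 = (n + 1) + 1 by ring, jtpE_succ]
  have e2 : (-(n + 1) : ℤ) = -n + (-1) := by ring
  rw [jtpF, e1, e2, zpow_add₀ h1, zpow_add₀ hp, zpow_add₀ hz, jtpF]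
  simp only [zpow_neg, zpow_one]
  field_simp

lemma norm_jtpF_succ (hp : p ≠ 0) (hz : z ≠ 0) (n : ℤ) :
    ‖jtpF p z (n + 1)‖ = ‖jtpF p z n‖ * (‖p‖ ^ n * ‖z‖) := by
  rw [jtpF_succ p z hp hz, norm_mul, norm_neg, norm_mul, norm_zpow]

lemma norm_jtpF_pred (hp : p ≠ 0) (hz : z ≠ 0) (n : ℤ) :
    ‖jtpF p z (-(n + 1))‖ = ‖jtpF p z (-n)‖ * (‖p‖ ^ (n + 1) * ‖z‖⁻¹) := by
  rw [jtpF_pred p z hp hz, norm_mul, norm_neg, norm_mul, norm_zpow, norm_inv]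

lemma summable_norm_jtpF (hp : ‖p‖ < 1) (hz : z ≠ 0) :
    Summable (fun n : ℤ => ‖jtpF p z n‖) := by
  by_cases hp0 : p = 0
  · apply summable_of_ne_finset_zero (s := ({0, 1} : Finset ℤ))
    intro n hn
    simp only [mem_insert, mem_singleton] at hn
    push_neg at hn
    have : jtpE n ≠ 0 := ne_of_gt (jtpE_pos hn.1 hn.2)
    simp [jtpF, hp0, zero_zpow _ this]
  · have hz' : 0 < ‖z‖ := norm_pos_iff.mpr hz
    apply Summable.of_nat_of_neg
    · apply summable_of_ratio_norm_eventually_le (r := 1/2) (by norm_num)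
      have h0 : Tendsto (fun n : ℕ => ‖p‖ ^ n * ‖z‖) atTop (nhds (0 * ‖z‖)) :=
        (tendsto_pow_atTop_nhds_zero_of_norm_lt_one (by simpa using hp)).mul_const _
      rw [zero_mul] at h0
      filter_upwards [h0.eventually_le_const (by norm_num : (0:ℝ) < 1/2)] with n hn
      rw [norm_norm, norm_norm, show (((n+1:ℕ)) : ℤ) = (n : ℤ) + 1 by push_cast; ring,
        norm_jtpF_succ p z hp0 hz, zpow_natCast, mul_comm (1/2)]
      exact mul_le_mul_of_nonneg_left hn (norm_nonneg _)
    · apply summable_of_ratio_norm_eventually_le (r := 1/2) (by norm_num)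
      have h0 : Tendsto (fun n : ℕ => ‖p‖ ^ (n+1) * ‖z‖⁻¹) atTop (nhds (0 * ‖z‖⁻¹)) := by
        apply Tendsto.mul_const
        exact (tendsto_pow_atTop_nhds_zero_of_norm_lt_one (by simpa using hp)).comp
          (tendsto_add_atTop_nat 1)
      rw [zero_mul] at h0
      filter_upwards [h0.eventually_le_const (by norm_num : (0:ℝ) < 1/2)] with n hn
      rw [norm_norm, norm_norm, show (-((n+1:ℕ)) : ℤ) = -((n : ℤ) + 1) by push_cast; ring,
        norm_jtpF_pred p z hp0 hz, mul_comm (1/2)]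
      refine mul_le_mul_of_nonneg_left ?_ (norm_nonneg _)
      rw [show ((n:ℤ) + 1) = ((n+1 : ℕ) : ℤ) by push_cast; ring, zpow_natCast]
      exact hn

end summability

lemma prod_one_sub_ge (s : Finset ℕ) (a : ℕ → ℝ) (h0 : ∀ i, 0 ≤ a i) (h1 : ∀ i, a i ≤ 1) :
    1 - ∑ i ∈ s, a i ≤ ∏ i ∈ s, (1 - a i) := by
  induction s using Finset.induction with
  | empty => simp
  | @insert j s' hx ih =>
    rw [Finset.prod_insert hx, Finset.sum_insert hx]
    have hs : 0 ≤ ∑ i ∈ s', a i := Finset.sum_nonneg fun i _ => h0 i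
    have hp1 : ∏ i ∈ s', (1 - a i) ≤ 1 :=
      Finset.prod_le_one (fun i _ => by nlinarith [h0 i, h1 i]) (fun i _ => by nlinarith [h0 i])
    nlinarith [h0 j, h1 j, ih]

lemma geom_sum_le_inv_one_sub (r : ℝ) (h0 : 0 ≤ r) (h1 : r < 1) (n : ℕ) :
    ∑ i ∈ Finset.range n, r ^ i ≤ (1 - r)⁻¹ := by
  have hr1 : (0:ℝ) < 1 - r := by linarith
  have heq : (r^n - 1)/(r-1) = (1-r^n)/(1-r) := by
    rw [← neg_div_neg_eq]; ring_nf
  rw [geom_sum_eq (by intro h; rw [h] at h1; exact lt_irrefl _ h1), heq, ← one_div]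
  exact div_le_div₀ (by norm_num) (by nlinarith [pow_nonneg h0 n]) hr1 le_rfl

lemma qp_lower_bound (r : ℝ) (h0 : 0 ≤ r) (h1 : r < 1) :
    ∃ δ > 0, ∀ m, δ ≤ ∏ k ∈ Finset.range m, (1 - r ^ (k+1)) := by
  have hpow : ∀ k : ℕ, 0 ≤ r ^ (k+1) := fun k => pow_nonneg h0 _
  have hpow1 : ∀ k : ℕ, r ^ (k+1) < 1 := fun k => pow_lt_one₀ h0 h1 (Nat.succ_ne_zero k)
  -- choose K with tail sum ≤ 1/2
  have htail : Tendsto (fun K : ℕ => r ^ (K+1) * (1-r)⁻¹) atTop (nhds (0 * (1-r)⁻¹)) :=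
    Tendsto.mul_const _ ((tendsto_pow_atTop_nhds_zero_of_lt_one h0 h1).comp
      (tendsto_add_atTop_nat 1))
  rw [zero_mul] at htail
  obtain ⟨K, hK⟩ := (htail.eventually_le_const (by norm_num : (0:ℝ) < 1/2)).exists
  have hKpos : (0:ℝ) < ∏ k ∈ Finset.range K, (1 - r^(k+1)) :=
    Finset.prod_pos fun k _ => by linarith [hpow1 k]
  refine ⟨(∏ k ∈ Finset.range K, (1 - r^(k+1))) * (1/2), by positivity, fun m => ?_⟩
  rcases le_or_gt m K with hm | hm
  · calc (∏ k ∈ Finset.range K, (1 - r^(k+1))) * (1/2)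
        ≤ (∏ k ∈ Finset.range K, (1 - r^(k+1))) * 1 := by nlinarith
      _ = ∏ k ∈ Finset.range K, (1 - r^(k+1)) := mul_one _
      _ ≤ ∏ k ∈ Finset.range m, (1 - r^(k+1)) := by
          rw [← Finset.prod_range_mul_prod_Ico _ hm]
          apply mul_le_of_le_one_right (le_of_lt (Finset.prod_pos fun k _ => by linarith [hpow1 k]))
          exact Finset.prod_le_one (fun k _ => by linarith [hpow1 k]) (fun k _ => by linarith [hpow k])
  · rw [← Finset.prod_range_mul_prod_Ico _ (le_of_lt hm)]
    apply mul_le_mul_of_nonneg_left _ (le_of_lt hKpos)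
    have hsum : ∑ k ∈ Finset.Ico K m, r^(k+1) ≤ 1/2 := by
      calc ∑ k ∈ Finset.Ico K m, r^(k+1)
          = ∑ j ∈ Finset.range (m - K), r^(K+j+1) := by
            rw [Finset.sum_Ico_eq_sum_range]
        _ = r^(K+1) * ∑ j ∈ Finset.range (m - K), r^j := by
            rw [Finset.mul_sum]
            exact Finset.sum_congr rfl fun j _ => by ring
        _ ≤ r^(K+1) * (1-r)⁻¹ := by
            apply mul_le_mul_of_nonneg_left (geom_sum_le_inv_one_sub r h0 h1 _) (hpow K)
        _ ≤ 1/2 := hK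
    calc (1:ℝ)/2 ≤ 1 - ∑ k ∈ Finset.Ico K m, r^(k+1) := by linarith
      _ ≤ ∏ k ∈ Finset.Ico K m, (1 - r^(k+1)) :=
          prod_one_sub_ge _ _ hpow (fun k => le_of_lt (hpow1 k))

lemma qp_upper_bound (r : ℝ) (h0 : 0 ≤ r) (h1 : r < 1) (m : ℕ) :
    ∏ k ∈ Finset.range m, (1 + r ^ (k+1)) ≤ Real.exp ((1-r)⁻¹) := by
  calc ∏ k ∈ Finset.range m, (1 + r ^ (k+1))
      ≤ ∏ k ∈ Finset.range m, Real.exp (r ^ (k+1)) := by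
        apply Finset.prod_le_prod (fun k _ => by positivity)
          (fun k _ => by rw [add_comm]; exact Real.add_one_le_exp _)
    _ = Real.exp (∑ k ∈ Finset.range m, r ^ (k+1)) := by rw [← Real.exp_sum]
    _ ≤ Real.exp ((1-r)⁻¹) := by
        apply Real.exp_le_exp.mpr
        calc ∑ k ∈ Finset.range m, r ^ (k+1) ≤ ∑ k ∈ Finset.range m, r ^ k := by
              apply Finset.sum_le_sum fun k _ => pow_le_pow_of_le_one h0 (le_of_lt h1) (by omega)
          _ ≤ (1-r)⁻¹ := geom_sum_le_inv_one_sub r h0 h1 m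

noncomputable def qpp (q : ℂ) (m : ℕ) : ℂ := ∏ k ∈ Finset.range m, (1 - q ^ (k+1))

lemma hasProd_qPoch (x q : ℂ) (hq : ‖q‖ < 1) :
    HasProd (fun n : ℕ => 1 - x * q ^ n) (qPoch x q) := by
  by_cases hzero : ∃ n : ℕ, 1 - x * q ^ n = 0
  · obtain ⟨n, hn⟩ := hzero
    have h0 : HasProd (fun n : ℕ => 1 - x * q ^ n) 0 := by
      rw [HasProd]
      refine Tendsto.congr' ?_ tendsto_const_nhds
      filter_upwards [eventually_ge_atTop ({n} : Finset ℕ)] with s hs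
      exact (Finset.prod_eq_zero (hs (Finset.mem_singleton_self n)) hn).symm
    rw [qPoch, h0.tprod_eq]
    exact h0
  · push_neg at hzero
    have hsum : Summable (fun n : ℕ => Complex.log (1 - x * q ^ n)) := by
      apply Summable.of_norm_bounded_eventually_nat (g := fun n => 3/2 * (‖x‖ * ‖q‖ ^ n))
      · exact ((summable_geometric_of_lt_one (norm_nonneg q) hq).mul_left _).mul_left _
      · have h0 : Tendsto (fun n : ℕ => ‖x‖ * ‖q‖ ^ n) atTop (nhds (‖x‖ * 0)) :=
          (tendsto_pow_atTop_nhds_zero_of_lt_one (norm_nonneg q) hq).const_mul _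
        rw [mul_zero] at h0
        filter_upwards [h0.eventually_le_const (by norm_num : (0:ℝ) < 1/2)] with n hn
        have hnorm : ‖-(x * q ^ n)‖ ≤ 1/2 := by
          rw [norm_neg, norm_mul, norm_pow]; exact hn
        have := Complex.norm_log_one_add_half_le_self hnorm
        rw [show (1 : ℂ) + -(x * q ^ n) = 1 - x * q ^ n by ring, norm_neg, norm_mul,
          norm_pow] at this
        exact this
    have := (Complex.multipliable_of_summable_log hsum).hasProd
    exact this

lemma tendsto_prod_qPoch (x q : ℂ) (hq : ‖q‖ < 1) :
    Tendsto (fun N => ∏ k ∈ Finset.range N, (1 - x * q ^ k)) atTop (nhds (qPoch x q)) :=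
  (hasProd_qPoch x q hq).tendsto_prod_nat

lemma tendsto_qpp (q : ℂ) (hq : ‖q‖ < 1) :
    Tendsto (fun N => qpp q N) atTop (nhds (qPoch q q)) := by
  have := tendsto_prod_qPoch q q hq
  apply this.congr
  intro N
  exact Finset.prod_congr rfl fun k _ => by rw [pow_succ']

lemma norm_qpp_le (q : ℂ) (hq : ‖q‖ < 1) (m : ℕ) :
    ‖qpp q m‖ ≤ Real.exp ((1-‖q‖)⁻¹) := by
  rw [qpp, norm_prod]
  calc ∏ k ∈ Finset.range m, ‖1 - q ^ (k+1)‖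
      ≤ ∏ k ∈ Finset.range m, (1 + ‖q‖ ^ (k+1)) := by
        apply Finset.prod_le_prod (fun k _ => norm_nonneg _)
        intro k _
        calc ‖1 - q^(k+1)‖ ≤ ‖(1:ℂ)‖ + ‖q^(k+1)‖ := norm_sub_le _ _
          _ = 1 + ‖q‖^(k+1) := by rw [norm_one, norm_pow]
    _ ≤ Real.exp ((1-‖q‖)⁻¹) := qp_upper_bound _ (norm_nonneg q) hq m

lemma norm_qpp_ge (q : ℂ) (hq : ‖q‖ < 1) :
    ∃ δ > 0, ∀ m, δ ≤ ‖qpp q m‖ := by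
  obtain ⟨δ, hδ, hδm⟩ := qp_lower_bound ‖q‖ (norm_nonneg q) hq
  refine ⟨δ, hδ, fun m => le_trans (hδm m) ?_⟩
  rw [qpp, norm_prod]
  apply Finset.prod_le_prod
  · intro k _
    have : ‖q‖^(k+1) < 1 := pow_lt_one₀ (norm_nonneg q) hq (Nat.succ_ne_zero k)
    linarith
  · intro k _
    calc 1 - ‖q‖^(k+1) = ‖(1:ℂ)‖ - ‖q^(k+1)‖ := by rw [norm_one, norm_pow]
      _ ≤ ‖1 - q^(k+1)‖ := norm_sub_norm_le _ _

lemma qpp_ne_zero (q : ℂ) (hq : ‖q‖ < 1) (m : ℕ) : qpp q m ≠ 0 := by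
  obtain ⟨δ, hδ, h⟩ := norm_qpp_ge q hq
  intro h0
  have := h m
  rw [h0, norm_zero] at this
  linarith

lemma norm_qPoch_qq_ge (q : ℂ) (hq : ‖q‖ < 1) :
    ∃ δ > 0, δ ≤ ‖qPoch q q‖ ∧ qPoch q q ≠ 0 := by
  obtain ⟨δ, hδ, h⟩ := norm_qpp_ge q hq
  have hlim : Tendsto (fun N => ‖qpp q N‖) atTop (nhds ‖qPoch q q‖) :=
    (tendsto_qpp q hq).norm
  have : δ ≤ ‖qPoch q q‖ := le_of_tendsto_of_tendsto' tendsto_const_nhds hlim h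
  exact ⟨δ, hδ, this, by intro h0; rw [h0, norm_zero] at this; linarith⟩

noncomputable def qb (q : ℂ) (m j : ℕ) : ℂ :=
  if j ≤ m then qpp q m / (qpp q j * qpp q (m-j)) else 0

lemma qpp_zero (q : ℂ) : qpp q 0 = 1 := by simp [qpp]

lemma qpp_succ (q : ℂ) (m : ℕ) : qpp q (m+1) = qpp q m * (1 - q^(m+1)) := by
  rw [qpp, Finset.prod_range_succ, qpp]

lemma qb_zero (q : ℂ) (hq : ‖q‖ < 1) (m : ℕ) : qb q m 0 = 1 := by
  rw [qb, if_pos (Nat.zero_le m), qpp_zero, Nat.sub_zero, one_mul,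
    div_self (qpp_ne_zero q hq m)]

lemma qb_self (q : ℂ) (hq : ‖q‖ < 1) (m : ℕ) : qb q m m = 1 := by
  rw [qb, if_pos le_rfl, Nat.sub_self, qpp_zero, mul_one, div_self (qpp_ne_zero q hq m)]

lemma qb_of_gt (q : ℂ) {m j : ℕ} (h : m < j) : qb q m j = 0 := by
  rw [qb, if_neg (by omega)]

lemma qb_pascal (q : ℂ) (hq : ‖q‖ < 1) {j m : ℕ} (hjm : j ≤ m) :
    qb q (m+1) (j+1) = qb q m (j+1) + q^(m-j) * qb q m j := by
  rcases eq_or_lt_of_le hjm with rfl | hlt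
  · rw [qb_self q hq, qb_of_gt q (by omega), Nat.sub_self, pow_zero, one_mul,
      qb_self q hq, zero_add]
  · have h1 : j + 1 ≤ m := hlt
    rw [qb, if_pos (by omega), qb, if_pos h1, qb, if_pos hjm]
    have e1 : m + 1 - (j+1) = m - j := by omega
    have e2 : m - j = (m - (j+1)) + 1 := by omega
    have e3 : m - (j+1) + 1 = m - j := by omega
    rw [e1, qpp_succ q m, qpp_succ q j, e2, qpp_succ q (m - (j+1)), e3]
    have hq1 := qpp_ne_zero q hq j
    have hq2 := qpp_ne_zero q hq (m - (j+1))
    have hq3 := qpp_ne_zero q hq m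
    have hA : (1 - q^(j+1)) ≠ 0 := by
      intro h
      have := qpp_ne_zero q hq (j+1)
      rw [qpp_succ, h, mul_zero] at this
      exact this rfl
    have hB : (1 - q^(m-j)) ≠ 0 := by
      intro h
      have := qpp_ne_zero q hq (m-j)
      rw [e2, qpp_succ, e3, h, mul_zero] at this
      exact this rfl
    have hqq : q^(m+1) = q^(m-j) * q^(j+1) := by
      rw [← pow_add]; congr 1; omega
    rw [hqq]
    field_simp
    ring
lemma cauchy_qbinom (q : ℂ) (hq : ‖q‖ < 1) (t : ℂ) (m : ℕ) :
    ∏ k ∈ Finset.range m, (1 + t * q^k) =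
      ∑ j ∈ Finset.range (m+1), q^(Nat.choose j 2) * qb q m j * t^j := by
  induction m with
  | zero => simp [qb_zero q hq 0]
  | succ m ih =>
    rw [Finset.prod_range_succ, ih, mul_add, mul_one, Finset.sum_mul]
    rw [Finset.sum_range_succ' (fun j => q^(Nat.choose j 2) * qb q (m+1) j * t^j) (m+1)]
    rw [Finset.sum_range_succ' (fun j => q^(Nat.choose j 2) * qb q m j * t^j) m]
    have htop : q^(Nat.choose (m+1+1) 2) * qb q m (m+1) * t^(m+1) = 0 := by
      rw [qb_of_gt q (by omega)]; ring
    have hext : ∑ i ∈ Finset.range m, q^(Nat.choose (i+1) 2) * qb q m (i+1) * t^(i+1)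
        = ∑ i ∈ Finset.range (m+1), q^(Nat.choose (i+1) 2) * qb q m (i+1) * t^(i+1) := by
      rw [Finset.sum_range_succ, qb_of_gt q (by omega)]
      ring
    rw [hext]
    have hcomb : ∀ i ∈ Finset.range (m+1),
        q^(Nat.choose (i+1) 2) * qb q (m+1) (i+1) * t^(i+1)
        = q^(Nat.choose (i+1) 2) * qb q m (i+1) * t^(i+1)
          + (q^(Nat.choose i 2) * qb q m i * t^i) * (t * q^m) := by
      intro i hi
      rw [Finset.mem_range] at hi
      have him : i ≤ m := by omega
      rw [qb_pascal q hq him, mul_add, add_mul, add_right_inj]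
      have hch : Nat.choose (i+1) 2 + (m - i) = Nat.choose i 2 + m := by
        rw [Nat.choose_succ_succ]
        simp [Nat.choose_one_right]
        omega
      calc q^(Nat.choose (i+1) 2) * (q^(m-i) * qb q m i) * t^(i+1)
          = q^(Nat.choose (i+1) 2 + (m-i)) * qb q m i * t^(i+1) := by
            rw [pow_add]; ring
        _ = q^(Nat.choose i 2 + m) * qb q m i * t^(i+1) := by rw [hch]
        _ = (q^(Nat.choose i 2) * qb q m i * t^i) * (t * q^m) := by
            rw [pow_add, pow_succ]; ring
    rw [Finset.sum_congr rfl hcomb, Finset.sum_add_distrib]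
    have h00 : q^(Nat.choose 0 2) * qb q (m+1) 0 * t^0 = q^(Nat.choose 0 2) * qb q m 0 * t^0 := by
      rw [qb_zero q hq, qb_zero q hq]
    rw [h00]
    ring

lemma jtpE_natCast_choose (j : ℕ) : ((Nat.choose j 2 : ℕ) : ℤ) = jtpE (j : ℤ) := by
  induction j with
  | zero => decide
  | succ j ih =>
    rw [Nat.choose_succ_succ, Nat.choose_one_right]
    push_cast
    rw [jtpE_succ]
    push_cast at ih
    linarith

lemma sum_range_succ_eq_jtpE (N : ℕ) :
    ((∑ k ∈ Finset.range N, (k+1) : ℕ) : ℤ) = jtpE (-(N:ℤ)) := by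
  have a1 : ∑ i ∈ Finset.range (N+1), i = ∑ k ∈ Finset.range N, (k+1) := by
    rw [Finset.sum_range_succ']
    simp
  have a2 := Finset.sum_range_id_mul_two (N+1)
  have a3 := jtpE_two_mul (-(N:ℤ))
  have a2' : (∑ i ∈ Finset.range (N+1), i) * 2 = (N+1) * N := by simpa using a2
  have a4 : (((∑ i ∈ Finset.range (N+1), i) : ℕ) : ℤ) * 2 = ((N:ℤ)+1) * N := by
    exact_mod_cast a2'
  rw [← a1]
  nlinarith [a4, a3]

lemma finite_jtp (q z : ℂ) (hq : ‖q‖ < 1) (hq0 : q ≠ 0) (hz : z ≠ 0) (N : ℕ) :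
    (∏ k ∈ Finset.range N, (1 - z * q^k)) * (∏ k ∈ Finset.range N, (1 - (q * z⁻¹) * q^k)) =
      ∑ j ∈ Finset.range (2*N+1),
        (-1:ℂ)^((j:ℤ) - N) * q^(jtpE ((j:ℤ) - N)) * z^((j:ℤ) - N) * qb q (2*N) j := by
  have h1 : (-1 : ℂ) ≠ 0 := by norm_num
  set t : ℂ := -z * q^(-(N:ℤ)) with ht
  set SN : ℕ := ∑ k ∈ Finset.range N, (k+1) with hSN
  -- second half of the big product
  have hsecond : ∀ k : ℕ, 1 + t * q^(N+k) = 1 - z * q^k := by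
    intro k
    have e : q^(-(N:ℤ)) * q^(N+k : ℕ) = q^k := by
      rw [← zpow_natCast q (N+k), ← zpow_natCast q k, ← zpow_add₀ hq0]
      congr 1; push_cast; ring
    rw [ht, show -z * q^(-(N:ℤ)) * q^(N+k:ℕ) = -z * (q^(-(N:ℤ)) * q^(N+k:ℕ)) by ring, e]
    ring
  -- first half of the big product
  have hfirst : ∀ k : ℕ, k < N →
      1 + t * q^(N-1-k) = (-z * (q^(k+1))⁻¹) * (1 - (q * z⁻¹) * q^k) := by
    intro k hk
    have e : q^(-(N:ℤ)) * q^(N-1-k : ℕ) = (q^(k+1 : ℕ))⁻¹ := by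
      rw [← zpow_natCast q (N-1-k), ← zpow_natCast q (k+1), ← zpow_add₀ hq0, ← zpow_neg]
      congr 1; omega
    have e2 : (q^(k+1:ℕ))⁻¹ * (q * q^k) = 1 := by
      rw [show q * q^k = q^(k+1) by rw [pow_succ]; ring]
      exact inv_mul_cancel₀ (pow_ne_zero _ hq0)
    have expand : (-z * (q^(k+1))⁻¹) * (1 - (q * z⁻¹) * q^k)
        = -z * (q^(k+1))⁻¹ + (z * z⁻¹) * ((q^(k+1:ℕ))⁻¹ * (q * q^k)) := by ring
    rw [expand, e2, mul_inv_cancel₀ hz, ht,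
      show -z * q^(-(N:ℤ)) * q^(N-1-k:ℕ) = -z * (q^(-(N:ℤ)) * q^(N-1-k:ℕ)) by ring, e]
    ring
  -- split the Cauchy product
  have hsplit : ∏ k ∈ Finset.range (2*N), (1 + t * q^k)
      = ((-z)^N * (q^SN)⁻¹ * ∏ k ∈ Finset.range N, (1 - (q * z⁻¹) * q^k))
        * ∏ k ∈ Finset.range N, (1 - z * q^k) := by
    rw [two_mul, Finset.prod_range_add]
    congr 1
    · rw [← Finset.prod_range_reflect (fun k => 1 + t * q^k) N]
      rw [Finset.prod_congr rfl (fun k hk => hfirst k (Finset.mem_range.mp hk)),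
        Finset.prod_mul_distrib, Finset.prod_mul_distrib, Finset.prod_const,
        Finset.card_range, Finset.prod_inv_distrib, Finset.prod_pow_eq_pow_sum]
    · exact Finset.prod_congr rfl (fun k _ => hsecond k)
  have hM : (-z)^N * (q^SN)⁻¹ ≠ 0 :=
    mul_ne_zero (pow_ne_zero _ (neg_ne_zero.mpr hz)) (inv_ne_zero (pow_ne_zero _ hq0))
  apply mul_left_cancel₀ hM
  have hcauchy := cauchy_qbinom q hq t (2*N)
  calc (-z)^N * (q^SN)⁻¹ * ((∏ k ∈ Finset.range N, (1 - z * q^k)) * ∏ k ∈ Finset.range N, (1 - (q * z⁻¹) * q^k))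
      = ((-z)^N * (q^SN)⁻¹ * ∏ k ∈ Finset.range N, (1 - (q * z⁻¹) * q^k))
        * ∏ k ∈ Finset.range N, (1 - z * q^k) := by ring
    _ = ∑ j ∈ Finset.range (2*N+1), q^(Nat.choose j 2) * qb q (2*N) j * t^j := by
        rw [← hsplit, hcauchy]
    _ = (-z)^N * (q^SN)⁻¹ * ∑ j ∈ Finset.range (2*N+1),
          (-1:ℂ)^((j:ℤ) - N) * q^(jtpE ((j:ℤ) - N)) * z^((j:ℤ) - N) * qb q (2*N) j := by
        rw [Finset.mul_sum]
        apply Finset.sum_congr rfl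
        intro j _
        -- canonical forms
        have tpow : t^j = (-1:ℂ)^(j:ℤ) * z^(j:ℤ) * q^(-(N:ℤ)*j) := by
          rw [ht, show -z * q^(-(N:ℤ)) = (-1) * z * q^(-(N:ℤ)) by ring, mul_pow, mul_pow,
            ← zpow_natCast ((-1:ℂ)) j, ← zpow_natCast z j, ← zpow_natCast (q^(-(N:ℤ))) j,
            ← zpow_mul]
        have Mpow : (-z)^N * (q^SN)⁻¹ = (-1:ℂ)^(N:ℤ) * z^(N:ℤ) * q^(-(SN:ℤ)) := by
          rw [show -z = (-1) * z by ring, mul_pow, ← zpow_natCast ((-1:ℂ)) N,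
            ← zpow_natCast z N, ← zpow_natCast q SN, ← zpow_neg]
        have hexp : -(SN:ℤ) + jtpE ((j:ℤ) - N) = (Nat.choose j 2 : ℤ) + (-(N:ℤ)*j) := by
          have e1 : jtpE ((j:ℤ) - N) = jtpE (j:ℤ) + jtpE (-(N:ℤ)) + (j:ℤ) * (-(N:ℤ)) := by
            rw [show (j:ℤ) - N = (j:ℤ) + (-(N:ℤ)) by ring, jtpE_add]
          rw [e1, jtpE_natCast_choose j, ← sum_range_succ_eq_jtpE N, ← hSN]
          ring
        calc q^(Nat.choose j 2) * qb q (2*N) j * t^j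
            = (-1:ℂ)^(j:ℤ) * z^(j:ℤ) * (q^((Nat.choose j 2 : ℕ):ℤ) * q^(-(N:ℤ)*j)) * qb q (2*N) j := by
              rw [tpow, zpow_natCast q]; ring
          _ = (-1:ℂ)^(j:ℤ) * z^(j:ℤ) * q^(((Nat.choose j 2:ℕ):ℤ) + (-(N:ℤ)*j)) * qb q (2*N) j := by
              rw [zpow_add₀ hq0]
          _ = (-1:ℂ)^((N:ℤ) + ((j:ℤ)-N)) * z^((N:ℤ) + ((j:ℤ)-N)) * q^(-(SN:ℤ) + jtpE ((j:ℤ)-N)) * qb q (2*N) j := by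
              rw [hexp, show (N:ℤ) + ((j:ℤ)-N) = (j:ℤ) by ring]
          _ = (-z)^N * (q^SN)⁻¹ *
              ((-1:ℂ)^((j:ℤ) - N) * q^(jtpE ((j:ℤ) - N)) * z^((j:ℤ) - N) * qb q (2*N) j) := by
              rw [Mpow, zpow_add₀ h1, zpow_add₀ hz, zpow_add₀ hq0]; ring

section main
variable (q z : ℂ)

noncomputable def jtpG (q z : ℂ) (N : ℕ) (i : ℤ) : ℂ :=
  if -(N:ℤ) ≤ i ∧ i ≤ N then jtpF q z i * (qpp q N * qb q (2*N) (i + N).toNat) else 0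

lemma jtpG_tsum_eq (hq : ‖q‖ < 1) (hq0 : q ≠ 0) (hz : z ≠ 0) (N : ℕ) :
    ∑' i : ℤ, jtpG q z N i =
      qpp q N * ((∏ k ∈ Finset.range N, (1 - z * q^k)) *
        (∏ k ∈ Finset.range N, (1 - (q * z⁻¹) * q^k))) := by
  rw [tsum_eq_sum (s := Finset.Icc (-(N:ℤ)) N) (by
    intro i hi
    rw [Finset.mem_Icc] at hi
    rw [jtpG, if_neg (by tauto)])]
  rw [finite_jtp q z hq hq0 hz N, Finset.mul_sum]
  refine (Finset.sum_nbij' (i := fun (j : ℕ) => (j : ℤ) - N)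
    (j := fun (i : ℤ) => (i + N).toNat) ?_ ?_ ?_ ?_ ?_).symm
  · intro j hj
    rw [Finset.mem_range] at hj
    rw [Finset.mem_Icc]
    omega
  · intro i hi
    rw [Finset.mem_Icc] at hi
    rw [Finset.mem_range]
    omega
  · intro j hj
    rw [Finset.mem_range] at hj
    omega
  · intro i hi
    rw [Finset.mem_Icc] at hi
    omega
  · intro j hj
    rw [Finset.mem_range] at hj
    rw [jtpG, if_pos (by constructor <;> omega)]
    rw [show ((j:ℤ) - N + N).toNat = j by omega]
    rw [jtpF]
    ring

lemma jtpG_tendsto (hq : ‖q‖ < 1) (hq0 : q ≠ 0) (hz : z ≠ 0) (i : ℤ) :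
    Tendsto (fun N => jtpG q z N i) atTop (nhds (jtpF q z i)) := by
  obtain ⟨δ, hδ, hL, hL0⟩ := norm_qPoch_qq_ge q hq
  set L := qPoch q q
  have h2N : Tendsto (fun N : ℕ => 2*N) atTop atTop :=
    tendsto_atTop_atTop.mpr fun b => ⟨b, fun a ha => by omega⟩
  have hiN : Tendsto (fun N : ℕ => (i + N).toNat) atTop atTop :=
    tendsto_atTop_atTop.mpr fun b => ⟨b + i.natAbs, fun a ha => by omega⟩
  have hNi : Tendsto (fun N : ℕ => ((N:ℤ) - i).toNat) atTop atTop :=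
    tendsto_atTop_atTop.mpr fun b => ⟨b + i.natAbs, fun a ha => by omega⟩
  have t1 : Tendsto (fun N => qpp q N * qpp q (2*N) /
      (qpp q ((i + N).toNat) * qpp q (((N:ℤ) - i).toNat))) atTop (nhds (L * L / (L * L))) := by
    exact Tendsto.div ((tendsto_qpp q hq).mul ((tendsto_qpp q hq).comp h2N))
      (((tendsto_qpp q hq).comp hiN).mul ((tendsto_qpp q hq).comp hNi))
      (mul_ne_zero hL0 hL0)
  have t2 : Tendsto (fun N => jtpF q z i * (qpp q N * qpp q (2*N) /
      (qpp q ((i + N).toNat) * qpp q (((N:ℤ) - i).toNat)))) atTop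
      (nhds (jtpF q z i)) := by
    have := t1.const_mul (jtpF q z i)
    rwa [div_self (mul_ne_zero hL0 hL0), mul_one] at this
  apply t2.congr'
  filter_upwards [eventually_ge_atTop i.natAbs] with N hN
  have hcond : -(N:ℤ) ≤ i ∧ i ≤ N := by omega
  rw [jtpG, if_pos hcond, qb, if_pos (by omega)]
  rw [show 2*N - (i + N).toNat = ((N:ℤ) - i).toNat by omega]
  ring

lemma jtpG_bound (hq : ‖q‖ < 1) (hz : z ≠ 0) :
    ∃ C : ℝ, ∀ N, ∀ i, ‖jtpG q z N i‖ ≤ C * ‖jtpF q z i‖ := by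
  obtain ⟨δ, hδ, hδm⟩ := norm_qpp_ge q hq
  set B := Real.exp ((1-‖q‖)⁻¹) with hB
  have hB0 : 0 < B := Real.exp_pos _
  refine ⟨B * B / (δ * δ), fun N i => ?_⟩
  rw [jtpG]
  split_ifs with h
  · rw [norm_mul, qb, if_pos (by omega), norm_mul, norm_div, norm_mul]
    rw [mul_comm (B * B / (δ * δ))]
    apply mul_le_mul_of_nonneg_left _ (norm_nonneg _)
    calc ‖qpp q N‖ * (‖qpp q (2*N)‖ / (‖qpp q (i+N).toNat‖ * ‖qpp q (2*N - (i+N).toNat)‖))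
        = ‖qpp q N‖ * ‖qpp q (2*N)‖ / (‖qpp q (i+N).toNat‖ * ‖qpp q (2*N - (i+N).toNat)‖) := by
          ring
      _ ≤ B * B / (δ * δ) := by
          apply div_le_div₀ (by positivity)
            (mul_le_mul (norm_qpp_le q hq _) (norm_qpp_le q hq _) (norm_nonneg _) (le_of_lt hB0))
            (by positivity)
            (mul_le_mul (hδm _) (hδm _) (le_of_lt hδ) (norm_nonneg _))
  · simp only [norm_zero]
    positivity

lemma main_eq (hq : ‖q‖ < 1) (hq0 : q ≠ 0) (hz : z ≠ 0) :
    qPoch q q * (qPoch z q * qPoch (q * z⁻¹) q) = ∑' n : ℤ, jtpF q z n := by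
  obtain ⟨C, hC⟩ := jtpG_bound q z hq hz
  have hdom : Tendsto (fun N => ∑' i : ℤ, jtpG q z N i) atTop (nhds (∑' i : ℤ, jtpF q z i)) := by
    apply tendsto_tsum_of_dominated_convergence
      (bound := fun i => C * ‖jtpF q z i‖)
      ((summable_norm_jtpF q z hq hz).mul_left C)
      (jtpG_tendsto q z hq hq0 hz)
    exact Eventually.of_forall (fun N => hC N)
  have hprod : Tendsto (fun N => qpp q N * ((∏ k ∈ Finset.range N, (1 - z * q^k)) *
      (∏ k ∈ Finset.range N, (1 - (q * z⁻¹) * q^k)))) atTop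
      (nhds (qPoch q q * (qPoch z q * qPoch (q * z⁻¹) q))) :=
    (tendsto_qpp q hq).mul ((tendsto_prod_qPoch z q hq).mul (tendsto_prod_qPoch (q*z⁻¹) q hq))
  have heq : (fun N => ∑' i : ℤ, jtpG q z N i) = fun N =>
      qpp q N * ((∏ k ∈ Finset.range N, (1 - z * q^k)) *
        (∏ k ∈ Finset.range N, (1 - (q * z⁻¹) * q^k))) :=
    funext fun N => jtpG_tsum_eq q z hq hq0 hz N
  rw [heq] at hdom
  exact tendsto_nhds_unique hprod hdom

end main

/-- Jacobi triple product identity. -/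
theorem jacobi_triple_product (p z : ℂ) (hp : ‖p‖ < 1) (hz : z ≠ 0) :
    Summable (fun n : ℤ => ‖(-1 : ℂ) ^ n * p ^ (n * (n - 1) / 2) * z ^ n‖) ∧
      qPoch p p * qPoch z p * qPoch (p * z⁻¹) p =
        ∑' n : ℤ, (-1 : ℂ) ^ n * p ^ (n * (n - 1) / 2) * z ^ n := by
  constructor
  · exact summable_norm_jtpF p z hp hz
  · have hts : (∑' n : ℤ, (-1 : ℂ) ^ n * p ^ (n * (n - 1) / 2) * z ^ n)
        = ∑' n : ℤ, jtpF p z n := rfl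
    rw [hts]
    by_cases hp0 : p = 0
    · subst hp0
      have h1 : qPoch 0 0 = 1 := by
        rw [qPoch, show (fun n : ℕ => 1 - (0:ℂ) * 0 ^ n) = fun _ => (1:ℂ) by
          funext n; ring, tprod_one]
      have h2 : qPoch z 0 = 1 - z := by
        have hsingle : HasProd (fun n : ℕ => 1 - z * (0:ℂ) ^ n) ((fun n : ℕ => 1 - z * (0:ℂ) ^ n) 0) := by
          apply hasProd_single
          intro b hb
          rw [zero_pow hb, mul_zero, sub_zero]
        rw [qPoch, hsingle.tprod_eq]
        norm_num
      have h3 : qPoch ((0:ℂ) * z⁻¹) 0 = 1 := by rw [zero_mul, h1]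
      have h4 : ∑' n : ℤ, jtpF 0 z n = 1 - z := by
        rw [tsum_eq_sum (s := ({0, 1} : Finset ℤ)) (by
          intro n hn
          simp only [Finset.mem_insert, Finset.mem_singleton] at hn
          push_neg at hn
          rw [jtpF, zero_zpow _ (ne_of_gt (jtpE_pos hn.1 hn.2))]
          ring)]
        rw [Finset.sum_insert (by decide), Finset.sum_singleton]
        rw [jtpF, jtpF]
        simp only [jtpE_zero, jtpE_one, zpow_zero, zpow_one]
        ring
      rw [h1, h2, h3, h4]
      ring
    · rw [← main_eq p z hp hp0 hz]
      ring
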